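/- arXiv:1002.2174 — 2 statements merged into one kernel-verified Lean document; each statement's English description precedes it below -/
import Mathlib

section
/- Let k_f : [0,∞)×[0,∞) → ℝ be continuous, nonnegative and symmetric (k_f(x,y) = k_f(y,x) for all x,y ≥ 0), and let u : [0,∞) → ℝ be continuous, nonnegative and compactly supported. Then ∫_0^∞ x·Q_f(u)(x) dx = 0, i.e. the fragmentation operator conserves the total mass ∫_0^∞ x u(x) dx. -/
open MeasureTheory

/-- The fragmentation operator:
`Q_f(u)(x) = (1/2) u(x) ∫_0^x k_f(y, x−y) dy − ∫_0^∞ k_f(x,y) u(x+y) dy`. -/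
noncomputable def Qf (kf : ℝ → ℝ → ℝ) (u : ℝ → ℝ) (x : ℝ) : ℝ :=
  (1 / 2) * u x * (∫ y in (0:ℝ)..x, kf y (x - y))
    - ∫ y in Set.Ioi (0:ℝ), kf x y * u (x + y)

open Set in
/-- The global-hypothesis version of mass conservation. -/
theorem frag_aux (K : ℝ → ℝ → ℝ) (v : ℝ → ℝ) (M : ℝ) (hM : 0 < M)
    (hK : Continuous (fun p : ℝ × ℝ => K p.1 p.2))
    (hKs : ∀ x y, K x y = K y x)
    (hv : Continuous v) (hvM : ∀ x ≥ M, v x = 0) :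
    ∫ x in Set.Ioi (0:ℝ), x * Qf K v x = 0 := by
  set μ : Measure ℝ := volume.restrict (Ioi (0:ℝ)) with hμ
  set g : ℝ × ℝ → ℝ := fun p => p.1 * K p.1 (p.2 - p.1) * v p.2 with hg
  set S : Set (ℝ × ℝ) := {p | p.1 < p.2 ∧ p.2 < M} with hS
  set F : ℝ × ℝ → ℝ := S.indicator g with hF
  have hSm : MeasurableSet S :=
    (measurableSet_lt measurable_fst measurable_snd).inter
      (measurableSet_lt measurable_snd measurable_const)
  have hgc : Continuous g := by
    apply Continuous.mul
    · exact continuous_fst.mul (hK.comp (continuous_fst.prodMk (continuous_snd.sub continuous_fst)))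
    · exact hv.comp continuous_snd
  -- bound for g on the box
  obtain ⟨C, hC⟩ := (isCompact_Icc.prod isCompact_Icc :
      IsCompact (Icc (0:ℝ) M ×ˢ Icc (0:ℝ) M)).exists_bound_of_continuousOn hgc.continuousOn
  have hC0 : 0 ≤ C := le_trans (norm_nonneg _) (hC (0, 0) (by constructor <;> exact ⟨le_refl _, hM.le⟩))
  -- integrability of F
  have hFi : Integrable F (μ.prod μ) := by
    have hmeas : AEStronglyMeasurable F (μ.prod μ) :=
      (hgc.stronglyMeasurable.indicator hSm).aestronglyMeasurable
    have hboxm : MeasurableSet (Icc (0:ℝ) M ×ˢ Icc (0:ℝ) M) :=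
      measurableSet_Icc.prod measurableSet_Icc
    have hbound : Integrable ((Icc (0:ℝ) M ×ˢ Icc (0:ℝ) M).indicator fun _ => C) (μ.prod μ) := by
      rw [integrable_indicator_iff hboxm]
      refine integrableOn_const ?_
      apply LT.lt.ne
      calc (μ.prod μ) (Icc (0:ℝ) M ×ˢ Icc (0:ℝ) M) = μ (Icc 0 M) * μ (Icc 0 M) :=
            Measure.prod_prod _ _
        _ ≤ volume (Icc (0:ℝ) M) * volume (Icc (0:ℝ) M) := by
            gcongr <;> exact Measure.restrict_le_self
        _ < ⊤ := by
            rw [Real.volume_Icc]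
            exact ENNReal.mul_lt_top ENNReal.ofReal_lt_top ENNReal.ofReal_lt_top
    refine hbound.mono' hmeas ?_
    have : μ.prod μ = (volume.prod volume).restrict ((Ioi (0:ℝ)) ×ˢ (Ioi (0:ℝ))) :=
      Measure.prod_restrict _ _
    rw [this]
    filter_upwards [ae_restrict_mem (measurableSet_Ioi.prod measurableSet_Ioi)] with p hp
    by_cases hpS : p ∈ S
    · have hbox : p ∈ Icc (0:ℝ) M ×ˢ Icc (0:ℝ) M := by
        refine ⟨⟨hp.1.le, ?_⟩, ⟨hp.2.le, hpS.2.le⟩⟩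
        exact (hpS.1.trans hpS.2).le
      rw [hF, Set.indicator_of_mem hpS, Set.indicator_of_mem hbox]
      exact hC p hbox
    · rw [hF, Set.indicator_of_notMem hpS]
      simp only [norm_zero]
      exact Set.indicator_nonneg (fun _ _ => hC0) _
  -- identification of the inner integral in x-direction (the "loss" term)
  have hB : ∀ x ∈ Ioi (0:ℝ),
      x * ∫ y in Ioi (0:ℝ), K x y * v (x + y) = ∫ z, F (x, z) ∂μ := by
    intro x hx
    have hx0 : (0:ℝ) < x := hx
    set h : ℝ → ℝ := fun z => x * K x (z - x) * v z with hh
    have hstep : (fun z => F (x, z)) = (Ioi x).indicator h := by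
      funext z
      by_cases hz : x < z
      · by_cases hzM : z < M
        · rw [hF, Set.indicator_of_mem (show (x, z) ∈ S from ⟨hz, hzM⟩),
            Set.indicator_of_mem (show z ∈ Ioi x from hz)]
        · rw [hF, Set.indicator_of_notMem (show (x, z) ∉ S from fun hmem => hzM hmem.2),
            Set.indicator_of_mem (show z ∈ Ioi x from hz), hh]
          simp [hvM z (le_of_not_gt hzM)]
      · rw [hF, Set.indicator_of_notMem (show (x, z) ∉ S from fun hmem => hz hmem.1),
          Set.indicator_of_notMem (show z ∉ Ioi x from hz)]
    rw [hstep, hμ, integral_indicator measurableSet_Ioi,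
      Measure.restrict_restrict measurableSet_Ioi, Set.Ioi_inter_Ioi,
      sup_eq_left.2 hx0.le]
    -- translate: ∫ z in Ioi x, h z = ∫ y in Ioi 0, h (y + x)
    have htrans : ∫ z in Ioi x, h z = ∫ y in Ioi (0:ℝ), h (y + x) := by
      rw [← integral_indicator measurableSet_Ioi, ← integral_indicator measurableSet_Ioi]
      rw [← integral_add_right_eq_self ((Ioi x).indicator h) x]
      congr 1
      funext y
      by_cases hy : 0 < y
      · rw [Set.indicator_of_mem (show y + x ∈ Ioi x from lt_add_of_pos_left x hy),
          Set.indicator_of_mem (show y ∈ Ioi (0:ℝ) from hy)]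
      · rw [Set.indicator_of_notMem
            (show y + x ∉ Ioi x from fun hmem => hy ((lt_add_iff_pos_left x).1 hmem)),
          Set.indicator_of_notMem (show y ∉ Ioi (0:ℝ) from hy)]
    rw [htrans]
    have : ∀ y : ℝ, h (y + x) = x * (K x y * v (x + y)) := by
      intro y
      rw [hh]
      simp only [add_sub_cancel_right]
      rw [add_comm y x]
      ring
    simp_rw [this]
    rw [integral_const_mul]
  -- identification of the inner integral in z-direction (the "gain" term)
  have hA : ∀ z ∈ Ioi (0:ℝ),
      (∫ x, F (x, z) ∂μ) = z * ((1 / 2) * v z * ∫ y in (0:ℝ)..z, K y (z - y)) := by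
    intro z hz
    have hz0 : (0:ℝ) < z := hz
    by_cases hzM : z < M
    · have hstep : (fun x => F (x, z)) = (Iio z).indicator (fun x => x * K x (z - x) * v z) := by
        funext x
        by_cases hxz : x < z
        · rw [hF, Set.indicator_of_mem (show (x, z) ∈ S from ⟨hxz, hzM⟩),
            Set.indicator_of_mem (show x ∈ Iio z from hxz)]
        · rw [hF, Set.indicator_of_notMem (show (x, z) ∉ S from fun hmem => hxz hmem.1),
            Set.indicator_of_notMem (show x ∉ Iio z from hxz)]
      rw [hstep, hμ, integral_indicator measurableSet_Iio,
        Measure.restrict_restrict measurableSet_Iio, Set.Iio_inter_Ioi]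
      -- reflection identity
      have hKc : Continuous fun x => K x (z - x) :=
        hK.comp (continuous_id.prodMk (continuous_const.sub continuous_id))
      have hint1 : IntervalIntegrable (fun x => K x (z - x)) volume 0 z :=
        hKc.intervalIntegrable _ _
      have hint2 : IntervalIntegrable (fun x => x * K x (z - x)) volume 0 z :=
        (continuous_id.mul hKc).intervalIntegrable _ _
      have hint3 : IntervalIntegrable (fun x => (z - x) * K x (z - x)) volume 0 z :=
        ((continuous_const.sub continuous_id).mul hKc).intervalIntegrable _ _
      have hrefl : ∫ x in (0:ℝ)..z, (z - x) * K x (z - x)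
          = ∫ x in (0:ℝ)..z, x * K x (z - x) := by
        have := intervalIntegral.integral_comp_sub_left
          (fun x => x * K x (z - x)) z (a := 0) (b := z)
        simp only [sub_self, sub_zero, sub_sub_cancel] at this
        rw [← this]
        congr 1
        funext x
        rw [hKs (z - x) x]
      have hsum : ∫ x in (0:ℝ)..z, x * K x (z - x)
          = (z / 2) * ∫ x in (0:ℝ)..z, K x (z - x) := by
        have h3 : (∫ x in (0:ℝ)..z, x * K x (z - x))
            + ∫ x in (0:ℝ)..z, (z - x) * K x (z - x)
            = ∫ x in (0:ℝ)..z, z * K x (z - x) := by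
          rw [← intervalIntegral.integral_add hint2 hint3]
          congr 1
          funext x
          ring
        rw [hrefl, intervalIntegral.integral_const_mul] at h3
        linarith
      have hIoo : ∫ x in Ioo (0:ℝ) z, x * K x (z - x) * v z
          = (∫ x in (0:ℝ)..z, x * K x (z - x)) * v z := by
        rw [intervalIntegral.integral_of_le hz0.le, integral_Ioc_eq_integral_Ioo,
          ← integral_mul_const]
      rw [hIoo, hsum]
      ring
    · have hstep : (fun x => F (x, z)) = fun _ => (0:ℝ) := by
        funext x
        rw [hF, Set.indicator_of_notMem (show (x, z) ∉ S from fun hmem => hzM hmem.2)]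
      rw [hstep, integral_zero, hvM z (le_of_not_gt hzM)]
      ring
  -- assemble
  have heq : ∀ x ∈ Ioi (0:ℝ), x * Qf K v x
      = (∫ z, F (z, x) ∂μ) - ∫ z', F (x, z') ∂μ := by
    intro x hx
    have h1 := hA x hx
    have h2 := hB x hx
    rw [Qf, mul_sub, h2, ← h1]
  have hAi : Integrable (fun z => ∫ x, F (x, z) ∂μ) μ := hFi.integral_prod_right
  have hBi : Integrable (fun x => ∫ z, F (x, z) ∂μ) μ := hFi.integral_prod_left
  have hswap : ∫ x, (∫ z, F (x, z) ∂μ) ∂μ = ∫ z, (∫ x, F (x, z) ∂μ) ∂μ :=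
    integral_integral_swap (f := fun x z => F (x, z)) hFi
  calc ∫ x in Ioi (0:ℝ), x * Qf K v x
      = ∫ x, ((fun x => ∫ z, F (z, x) ∂μ) x - (fun x => ∫ z', F (x, z') ∂μ) x) ∂μ :=
        setIntegral_congr_fun measurableSet_Ioi heq
    _ = (∫ x, (∫ z, F (z, x) ∂μ) ∂μ) - ∫ x, (∫ z', F (x, z') ∂μ) ∂μ :=
        integral_sub hAi hBi
    _ = 0 := by rw [hswap]; ring

/-- the fragmentation operator conserves the total mass. -/
theorem fragmentation_mass_conservation
    (kf : ℝ → ℝ → ℝ) (u : ℝ → ℝ)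
    (hkf_cont : ContinuousOn (fun p : ℝ × ℝ => kf p.1 p.2) (Set.Ici 0 ×ˢ Set.Ici 0))
    (hkf_nonneg : ∀ x ∈ Set.Ici (0:ℝ), ∀ y ∈ Set.Ici (0:ℝ), 0 ≤ kf x y)
    (hkf_symm : ∀ x ∈ Set.Ici (0:ℝ), ∀ y ∈ Set.Ici (0:ℝ), kf x y = kf y x)
    (hu_cont : ContinuousOn u (Set.Ici 0))
    (hu_nonneg : ∀ x ∈ Set.Ici (0:ℝ), 0 ≤ u x)
    (hu_supp : ∃ M : ℝ, 0 < M ∧ ∀ x ≥ M, u x = 0) :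
    ∫ x in Set.Ioi (0:ℝ), x * Qf kf u x = 0 := by
  obtain ⟨M, hM, huM⟩ := hu_supp
  set kc : ℝ → ℝ → ℝ := fun x y => kf (x ⊔ 0) (y ⊔ 0) with hkc
  set uc : ℝ → ℝ := fun x => u (x ⊔ 0) with huc
  have hsup0 : ∀ t : ℝ, (0:ℝ) ≤ t ⊔ 0 := fun t => le_max_right t 0
  have hKc : Continuous (fun p : ℝ × ℝ => kc p.1 p.2) := by
    have hmap : Continuous (fun p : ℝ × ℝ => ((p.1 ⊔ 0, p.2 ⊔ 0) : ℝ × ℝ)) :=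
      (continuous_fst.max continuous_const).prodMk (continuous_snd.max continuous_const)
    exact hkf_cont.comp_continuous hmap fun p => ⟨hsup0 p.1, hsup0 p.2⟩
  have hKs : ∀ x y : ℝ, kc x y = kc y x := fun x y =>
    hkf_symm _ (hsup0 x) _ (hsup0 y)
  have hvc : Continuous uc :=
    hu_cont.comp_continuous (continuous_id.max continuous_const) hsup0
  have hvM : ∀ x ≥ M, uc x = 0 := by
    intro x hx
    rw [huc]
    simp only []
    rw [sup_eq_left.2 (le_trans hM.le hx)]
    exact huM x hx
  have key := frag_aux kc uc M hM hKc hKs hvc hvM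
  conv_rhs => rw [← key]
  apply setIntegral_congr_fun measurableSet_Ioi
  intro x hx
  have hx0 : (0:ℝ) < x := hx
  congr 1
  simp only [Qf]
  have hux : u x = uc x := by rw [huc]; simp only []; rw [sup_eq_left.2 hx0.le]
  have hI1 : ∫ y in (0:ℝ)..x, kf y (x - y) = ∫ y in (0:ℝ)..x, kc y (x - y) := by
    apply intervalIntegral.integral_congr
    intro y hy
    rw [Set.uIcc_of_le hx0.le] at hy
    rw [hkc]
    simp only []
    rw [sup_eq_left.2 hy.1, sup_eq_left.2 (by linarith [hy.2] : (0:ℝ) ≤ x - y)]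
  have hI2 : ∫ y in Set.Ioi (0:ℝ), kf x y * u (x + y)
      = ∫ y in Set.Ioi (0:ℝ), kc x y * uc (x + y) := by
    apply setIntegral_congr_fun measurableSet_Ioi
    intro y hy
    have hy0 : (0:ℝ) < y := hy
    rw [hkc, huc]
    simp only []
    rw [sup_eq_left.2 hx0.le, sup_eq_left.2 hy0.le,
      sup_eq_left.2 (by linarith : (0:ℝ) ≤ x + y)]
  rw [hux, hI1, hI2]
end

section
/- Let k_f : [0,∞)×[0,∞) → ℝ be continuous and symmetric (k_f(x,y) = k_f(y,x)), and let u : [0,∞) → ℝ be continuous and compactly supported. Define F(u)(x) = ∫_0^x ∫_{x−y}^∞ y · k_f(y,z) u(y+z) dz dy. Then F(u) is differentiable on (0,∞) and for every x > 0, (d/dx) F(u)(x) = −x · Q_f(u)(x); that is, the fragmentation operator admits the conservative form x·Q_f(u) = −∂_x F(u). -/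
open MeasureTheory

/-- The conservative fragmentation flux:
`F(u)(x) = ∫_0^x ∫_{x−y}^∞ y · k_f(y,z) u(y+z) dz dy`. -/
noncomputable def fragFlux (kf : ℝ → ℝ → ℝ) (u : ℝ → ℝ) (x : ℝ) : ℝ :=
  ∫ y in (0:ℝ)..x, ∫ z in Set.Ioi (x - y), y * kf y z * u (y + z)


private lemma intOn_Ioi {f : ℝ → ℝ} {b : ℝ} (a : ℝ) (hf : Continuous f)
    (h0 : ∀ z ≥ b, f z = 0) : IntegrableOn f (Set.Ioi a) := by
  have hu : Set.Ioi a = Set.Ioc a (max a b) ∪ Set.Ioi (max a b) :=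
    (Set.Ioc_union_Ioi_eq_Ioi (le_max_left _ _)).symm
  rw [hu]
  apply IntegrableOn.union
  · exact hf.integrableOn_Ioc
  · exact (integrableOn_zero (s := Set.Ioi (max a b))).congr_fun
      (fun z hz => (h0 z ((le_max_right a b).trans hz.le)).symm) measurableSet_Ioi

private lemma split_Ioi {f : ℝ → ℝ} {b c : ℝ} (hc : 0 ≤ c) (hf : Continuous f)
    (h0 : ∀ z ≥ b, f z = 0) :
    ∫ z in Set.Ioi (0:ℝ), f z = (∫ z in (0:ℝ)..c, f z) + ∫ z in Set.Ioi c, f z := by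
  rw [intervalIntegral.integral_of_le hc,
    ← setIntegral_union (Set.Ioc_disjoint_Ioi le_rfl) measurableSet_Ioi
      hf.integrableOn_Ioc (intOn_Ioi c hf h0), Set.Ioc_union_Ioi_eq_Ioi hc]

private lemma Ioi_zero {f : ℝ → ℝ} {b : ℝ} (hb : ∀ z ≥ b, f z = 0) {c : ℝ} (hc : b ≤ c) :
    ∫ z in Set.Ioi c, f z = 0 := by
  rw [setIntegral_congr_fun measurableSet_Ioi
    (g := fun _ => (0:ℝ)) (fun z hz => hb z (hc.trans hz.le))]
  simp

private lemma Ioi_eq_interval {f : ℝ → ℝ} {b : ℝ} (hb : 0 ≤ b) (hf : Continuous f)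
    (h0 : ∀ z ≥ b, f z = 0) :
    ∫ z in Set.Ioi (0:ℝ), f z = ∫ z in (0:ℝ)..b, f z := by
  rw [split_Ioi hb hf h0, Ioi_zero h0 le_rfl, add_zero]

private lemma Cker_sym {k : ℝ → ℝ → ℝ} (hk : Continuous (Function.uncurry k))
    (hsym : ∀ a b, k a b = k b a) (x : ℝ) :
    ∫ y in (0:ℝ)..x, y * k y (x - y) = x / 2 * ∫ y in (0:ℝ)..x, k y (x - y) := by
  have hc1 : Continuous fun y : ℝ => k y (x - y) :=
    hk.comp (continuous_id.prodMk (continuous_const.sub continuous_id))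
  have hc2 : Continuous fun y : ℝ => y * k y (x - y) := continuous_id.mul hc1
  have hc3 : Continuous fun y : ℝ => (x - y) * k y (x - y) :=
    (continuous_const.sub continuous_id).mul hc1
  have h1 : (∫ y in (0:ℝ)..x, (fun w => w * k (x - w) w) (x - y))
      = ∫ w in (0:ℝ)..x, w * k (x - w) w := by
    rw [intervalIntegral.integral_comp_sub_left (fun w => w * k (x - w) w) x]
    norm_num
  have h2 : (∫ y in (0:ℝ)..x, (x - y) * k y (x - y)) = ∫ y in (0:ℝ)..x, y * k y (x - y) := by
    calc (∫ y in (0:ℝ)..x, (x - y) * k y (x - y))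
        = ∫ y in (0:ℝ)..x, (fun w => w * k (x - w) w) (x - y) := by
          apply intervalIntegral.integral_congr
          intro y _
          simp [sub_sub_cancel]
      _ = ∫ w in (0:ℝ)..x, w * k (x - w) w := h1
      _ = ∫ w in (0:ℝ)..x, w * k w (x - w) := by
          apply intervalIntegral.integral_congr
          intro w _
          simp only []
          rw [hsym]
  have key : (∫ y in (0:ℝ)..x, y * k y (x - y)) + (∫ y in (0:ℝ)..x, y * k y (x - y))
      = x * ∫ y in (0:ℝ)..x, k y (x - y) := by
    calc (∫ y in (0:ℝ)..x, y * k y (x - y)) + (∫ y in (0:ℝ)..x, y * k y (x - y))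
        = (∫ y in (0:ℝ)..x, y * k y (x - y)) + ∫ y in (0:ℝ)..x, (x - y) * k y (x - y) := by
          rw [h2]
      _ = ∫ y in (0:ℝ)..x, (y * k y (x - y) + (x - y) * k y (x - y)) :=
          (intervalIntegral.integral_add (hc2.intervalIntegrable _ _)
            (hc3.intervalIntegrable _ _)).symm
      _ = ∫ y in (0:ℝ)..x, x * k y (x - y) := by
          apply intervalIntegral.integral_congr
          intro y _
          ring
      _ = x * ∫ y in (0:ℝ)..x, k y (x - y) := intervalIntegral.integral_const_mul x _
  linarith

private lemma triangle_swap {h : ℝ → ℝ → ℝ} (hh : Continuous (Function.uncurry h))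
    {x : ℝ} (hx : 0 ≤ x) :
    ∫ y in (0:ℝ)..x, (∫ t in y..x, h y t) = ∫ t in (0:ℝ)..x, (∫ y in (0:ℝ)..t, h y t) := by
  set S : Set (ℝ × ℝ) := {p : ℝ × ℝ | p.1 ≤ p.2} with hS
  have hSm : MeasurableSet S := measurableSet_le measurable_fst measurable_snd
  set g : ℝ × ℝ → ℝ := S.indicator (Function.uncurry h) with hg
  have hgm : StronglyMeasurable g := hh.stronglyMeasurable.indicator hSm
  -- bound
  obtain ⟨B, hB⟩ := (isCompact_Icc.prod isCompact_Icc :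
    IsCompact (Set.Icc (0:ℝ) x ×ˢ Set.Icc (0:ℝ) x)).exists_bound_of_continuousOn hh.continuousOn
  have hB0 : (0:ℝ) ≤ B := le_trans (norm_nonneg _) (hB (0, 0) ⟨Set.mem_Icc.2 ⟨le_rfl, hx⟩, Set.mem_Icc.2 ⟨le_rfl, hx⟩⟩)
  have hgB : ∀ p ∈ Set.Ioc (0:ℝ) x ×ˢ Set.Ioc (0:ℝ) x, ‖g p‖ ≤ B := by
    intro p hp
    have hp' : p ∈ Set.Icc (0:ℝ) x ×ˢ Set.Icc (0:ℝ) x :=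
      ⟨Set.Ioc_subset_Icc_self hp.1, Set.Ioc_subset_Icc_self hp.2⟩
    by_cases hpS : p ∈ S
    · rw [hg, Set.indicator_of_mem hpS]; exact hB p hp'
    · rw [hg, Set.indicator_of_notMem hpS]; simpa using hB0
  haveI : IsFiniteMeasure ((volume : Measure ℝ).restrict (Set.Ioc 0 x)) :=
    ⟨by rw [Measure.restrict_apply_univ]; exact measure_Ioc_lt_top⟩
  have hgi : Integrable (fun p : ℝ × ℝ => g p)
      (((volume : Measure ℝ).restrict (Set.Ioc 0 x)).prod
        ((volume : Measure ℝ).restrict (Set.Ioc 0 x))) := by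
    refine ⟨hgm.aestronglyMeasurable, HasFiniteIntegral.of_bounded (C := B) ?_⟩
    rw [Measure.prod_restrict]
    exact (ae_restrict_iff' (measurableSet_Ioc.prod measurableSet_Ioc)).2
      (Filter.Eventually.of_forall fun p hp => hgB p hp)
  have hswap : ∫ y in Set.Ioc (0:ℝ) x, (∫ t in Set.Ioc (0:ℝ) x, g (y, t))
      = ∫ t in Set.Ioc (0:ℝ) x, (∫ y in Set.Ioc (0:ℝ) x, g (y, t)) := by
    exact integral_integral_swap (f := fun y t => g (y, t)) hgi
  -- left side
  have hleft : ∀ y ∈ Set.Ioc (0:ℝ) x,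
      (∫ t in y..x, h y t) = ∫ t in Set.Ioc (0:ℝ) x, g (y, t) := by
    intro y hy
    have hgy : (fun t => g (y, t)) = (Set.Ici y).indicator (h y) := by
      funext t
      by_cases hyt : y ≤ t <;>
        simp [hg, hS, Set.indicator_apply, hyt, Set.mem_setOf_eq, Function.uncurry]
    have hint : ∀ a b : ℝ, IntegrableOn (fun t => g (y, t)) (Set.Ioc a b) := by
      intro a b
      rw [hgy]
      exact ((hh.uncurry_left y).integrableOn_Ioc).indicator measurableSet_Ici
    rw [← Set.Ioc_union_Ioc_eq_Ioc hy.1.le hy.2,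
      setIntegral_union (Set.Ioc_disjoint_Ioc_of_le le_rfl) measurableSet_Ioc
        (hint _ _) (hint _ _)]
    have e1 : ∫ t in Set.Ioc (0:ℝ) y, g (y, t) = 0 := by
      rw [integral_Ioc_eq_integral_Ioo,
        setIntegral_congr_fun measurableSet_Ioo (g := fun _ => (0:ℝ))
          (fun t ht => by rw [hg, Set.indicator_of_notMem (by exact not_le.2 ht.2)])]
      simp
    have e2 : ∫ t in Set.Ioc y x, g (y, t) = ∫ t in Set.Ioc y x, h y t :=
      setIntegral_congr_fun measurableSet_Ioc
        (fun t ht => by rw [hg, Set.indicator_of_mem (by exact ht.1.le)]; rfl)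
    rw [e1, e2, zero_add, intervalIntegral.integral_of_le hy.2]
  -- right side
  have hright : ∀ t ∈ Set.Ioc (0:ℝ) x,
      (∫ y in (0:ℝ)..t, h y t) = ∫ y in Set.Ioc (0:ℝ) x, g (y, t) := by
    intro t ht
    have hint : ∀ a b : ℝ, IntegrableOn (fun y => g (y, t)) (Set.Ioc a b) := by
      intro a b
      have hgy : (fun y => g (y, t)) = (Set.Iic t).indicator (fun y => h y t) := by
        funext y
        by_cases hyt : y ≤ t <;>
          simp [hg, hS, Set.indicator_apply, hyt, Set.mem_setOf_eq, Function.uncurry]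
      rw [hgy]
      have hcy : Continuous fun y => h y t := hh.comp (continuous_id.prodMk continuous_const)
      exact (hcy.integrableOn_Ioc).indicator measurableSet_Iic
    rw [← Set.Ioc_union_Ioc_eq_Ioc ht.1.le ht.2,
      setIntegral_union (Set.Ioc_disjoint_Ioc_of_le le_rfl) measurableSet_Ioc
        (hint _ _) (hint _ _)]
    have e1 : ∫ y in Set.Ioc (0:ℝ) t, g (y, t) = ∫ y in Set.Ioc (0:ℝ) t, h y t :=
      setIntegral_congr_fun measurableSet_Ioc
        (fun y hy => by rw [hg, Set.indicator_of_mem (by exact hy.2)]; rfl)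
    have e2 : ∫ y in Set.Ioc t x, g (y, t) = 0 := by
      rw [setIntegral_congr_fun measurableSet_Ioc (g := fun _ => (0:ℝ))
        (fun y hy => by rw [hg, Set.indicator_of_notMem (by exact not_le.2 hy.1)])]
      simp
    rw [e1, e2, add_zero, intervalIntegral.integral_of_le ht.1.le]
  calc ∫ y in (0:ℝ)..x, (∫ t in y..x, h y t)
      = ∫ y in Set.Ioc (0:ℝ) x, (∫ t in y..x, h y t) := intervalIntegral.integral_of_le hx
    _ = ∫ y in Set.Ioc (0:ℝ) x, (∫ t in Set.Ioc (0:ℝ) x, g (y, t)) :=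
        setIntegral_congr_fun measurableSet_Ioc (fun y hy => hleft y hy)
    _ = ∫ t in Set.Ioc (0:ℝ) x, (∫ y in Set.Ioc (0:ℝ) x, g (y, t)) := hswap
    _ = ∫ t in Set.Ioc (0:ℝ) x, (∫ y in (0:ℝ)..t, h y t) :=
        (setIntegral_congr_fun measurableSet_Ioc (fun t ht => hright t ht)).symm
    _ = ∫ t in (0:ℝ)..x, (∫ y in (0:ℝ)..t, h y t) := (intervalIntegral.integral_of_le hx).symm

private lemma repr_lemma {k : ℝ → ℝ → ℝ} {v : ℝ → ℝ} {M : ℝ}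
    (hk : Continuous (Function.uncurry k)) (hv : Continuous v) (hM : 0 < M)
    (hv0 : ∀ z ≥ M, v z = 0) {x : ℝ} (hx : 0 < x) :
    fragFlux k v x = ∫ t in (0:ℝ)..x,
      ((∫ z in (0:ℝ)..M, t * k t z * v (t + z))
        - (∫ y in (0:ℝ)..t, y * k y (t - y)) * v t) := by
  have hkc : ∀ y : ℝ, Continuous fun z => y * k y z * v (y + z) := fun y =>
    (continuous_const.mul (hk.uncurry_left y)).mul (hv.comp (continuous_const.add continuous_id))
  have hfc : Continuous (Function.uncurry fun y z : ℝ => y * k y z * v (y + z)) :=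
    (continuous_fst.mul hk).mul (hv.comp (continuous_fst.add continuous_snd))
  have hhc : Continuous (Function.uncurry fun y t : ℝ => y * k y (t - y) * v t) :=
    (continuous_fst.mul
      (hk.comp (continuous_fst.prodMk (continuous_snd.sub continuous_fst)))).mul
      (hv.comp continuous_snd)
  have h0 : ∀ y : ℝ, 0 ≤ y → ∀ z ≥ M, y * k y z * v (y + z) = 0 := fun y hy z hz => by
    rw [hv0 (y + z) (by linarith), mul_zero]
  have stepA : fragFlux k v x = ∫ y in (0:ℝ)..x,
      ((∫ z in (0:ℝ)..M, y * k y z * v (y + z)) - ∫ t in y..x, y * k y (t - y) * v t) := by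
    unfold fragFlux
    apply intervalIntegral.integral_congr
    intro y hy
    rw [Set.uIcc_of_le hx.le] at hy
    have h1 : ∫ z in Set.Ioi (0:ℝ), y * k y z * v (y + z)
        = (∫ z in (0:ℝ)..(x - y), y * k y z * v (y + z))
          + ∫ z in Set.Ioi (x - y), y * k y z * v (y + z) :=
      split_Ioi (by linarith [hy.2]) (hkc y) (h0 y hy.1)
    have h2 : ∫ z in Set.Ioi (0:ℝ), y * k y z * v (y + z)
        = ∫ z in (0:ℝ)..M, y * k y z * v (y + z) :=
      Ioi_eq_interval hM.le (hkc y) (h0 y hy.1)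
    have h3 : ∫ z in (0:ℝ)..(x - y), y * k y z * v (y + z)
        = ∫ t in y..x, y * k y (t - y) * v t := by
      have hcs := intervalIntegral.integral_comp_sub_right
        (a := y) (b := x) (fun z => y * k y z * v (y + z)) y
      simp only [sub_self] at hcs
      rw [← hcs]
      apply intervalIntegral.integral_congr
      intro t _
      simp only []
      rw [show y + (t - y) = t by ring]
    simp only []
    linarith
  rw [stepA]
  have hi1 : IntervalIntegrable (fun y => ∫ z in (0:ℝ)..M, y * k y z * v (y + z)) volume 0 x :=
    (intervalIntegral.continuous_parametric_intervalIntegral_of_continuous'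
      hfc 0 M).intervalIntegrable 0 x
  have hD0 : Continuous fun y => ∫ t in (0:ℝ)..y, y * k y (t - y) * v t :=
    intervalIntegral.continuous_parametric_intervalIntegral_of_continuous (μ := volume) hhc continuous_id
  have hDx : Continuous fun y => ∫ t in (0:ℝ)..x, y * k y (t - y) * v t :=
    intervalIntegral.continuous_parametric_intervalIntegral_of_continuous' hhc 0 x
  have hDeq : (fun y => ∫ t in y..x, y * k y (t - y) * v t)
      = fun y => (∫ t in (0:ℝ)..x, y * k y (t - y) * v t)
        - ∫ t in (0:ℝ)..y, y * k y (t - y) * v t := by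
    funext y
    have := intervalIntegral.integral_add_adjacent_intervals (μ := volume) (a := (0:ℝ)) (b := y) (c := x)
      ((hhc.uncurry_left y).intervalIntegrable _ _)
      ((hhc.uncurry_left y).intervalIntegrable _ _)
    linarith
  have hi2 : IntervalIntegrable (fun y => ∫ t in y..x, y * k y (t - y) * v t) volume 0 x := by
    rw [hDeq]
    exact (hDx.sub hD0).intervalIntegrable 0 x
  have hCc : Continuous fun t => ∫ y in (0:ℝ)..t, y * k y (t - y) :=
    intervalIntegral.continuous_parametric_intervalIntegral_of_continuous (μ := volume)
      (f := fun t y => y * k y (t - y))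
      (continuous_snd.mul (hk.comp (continuous_snd.prodMk (continuous_fst.sub continuous_snd))))
      continuous_id
  have hi3 : IntervalIntegrable (fun t => (∫ y in (0:ℝ)..t, y * k y (t - y)) * v t) volume 0 x :=
    (hCc.mul hv).intervalIntegrable 0 x
  rw [intervalIntegral.integral_sub hi1 hi2, intervalIntegral.integral_sub hi1 hi3]
  congr 1
  calc ∫ y in (0:ℝ)..x, ∫ t in y..x, y * k y (t - y) * v t
      = ∫ t in (0:ℝ)..x, ∫ y in (0:ℝ)..t, y * k y (t - y) * v t :=
        triangle_swap hhc hx.le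
    _ = ∫ t in (0:ℝ)..x, (∫ y in (0:ℝ)..t, y * k y (t - y)) * v t := by
        apply intervalIntegral.integral_congr
        intro t _
        simp only []
        rw [← intervalIntegral.integral_mul_const]

/-- the fragmentation operator admits the conservative form
`x·Q_f(u) = −∂_x F(u)` on `(0,∞)`. -/
theorem fragmentation_conservative_form
    (kf : ℝ → ℝ → ℝ) (u : ℝ → ℝ)
    (hkf_cont : ContinuousOn (fun p : ℝ × ℝ => kf p.1 p.2) (Set.Ici 0 ×ˢ Set.Ici 0))
    (hkf_symm : ∀ x ∈ Set.Ici (0:ℝ), ∀ y ∈ Set.Ici (0:ℝ), kf x y = kf y x)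
    (hu_cont : ContinuousOn u (Set.Ici 0))
    (hu_supp : ∃ M : ℝ, 0 < M ∧ ∀ x ≥ M, u x = 0) :
    ∀ x > (0:ℝ), HasDerivAt (fragFlux kf u) (-(x * Qf kf u x)) x := by
  obtain ⟨M, hM0, hMs⟩ := hu_supp
  intro x hx
  set v : ℝ → ℝ := fun s => u (max s 0) with hvdef
  set k : ℝ → ℝ → ℝ := fun a b => kf (max a 0) (max b 0) with hkdef
  have hv : Continuous v :=
    hu_cont.comp_continuous (continuous_id.max continuous_const) fun s => Set.mem_Ici.2 (le_max_right _ _)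
  have hk : Continuous (Function.uncurry k) :=
    hkf_cont.comp_continuous
      ((continuous_fst.max continuous_const).prodMk (continuous_snd.max continuous_const))
      (fun p => ⟨Set.mem_Ici.2 (le_max_right _ _), Set.mem_Ici.2 (le_max_right _ _)⟩)
  have hsym : ∀ a b, k a b = k b a := fun a b =>
    hkf_symm _ (Set.mem_Ici.2 (le_max_right _ _)) _ (Set.mem_Ici.2 (le_max_right _ _))
  have hveq : ∀ s : ℝ, 0 ≤ s → v s = u s := fun s hs => by
    show u (max s 0) = u s
    rw [max_eq_left hs]
  have hkeq : ∀ a b : ℝ, 0 ≤ a → 0 ≤ b → k a b = kf a b := fun a b ha hb => by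
    show kf (max a 0) (max b 0) = kf a b
    rw [max_eq_left ha, max_eq_left hb]
  have hv0 : ∀ z ≥ M, v z = 0 := fun z hz => by
    rw [hveq z (hM0.le.trans hz)]; exact hMs z hz
  set phi : ℝ → ℝ := fun t =>
    (∫ z in (0:ℝ)..M, t * k t z * v (t + z))
      - (∫ y in (0:ℝ)..t, y * k y (t - y)) * v t with hphidef
  have hfc : Continuous (Function.uncurry fun y z : ℝ => y * k y z * v (y + z)) :=
    (continuous_fst.mul hk).mul (hv.comp (continuous_fst.add continuous_snd))
  have hCc : Continuous fun t => ∫ y in (0:ℝ)..t, y * k y (t - y) :=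
    intervalIntegral.continuous_parametric_intervalIntegral_of_continuous (μ := volume)
      (f := fun t y => y * k y (t - y))
      (continuous_snd.mul (hk.comp (continuous_snd.prodMk (continuous_fst.sub continuous_snd))))
      continuous_id
  have hphic : Continuous phi :=
    (intervalIntegral.continuous_parametric_intervalIntegral_of_continuous'
      hfc 0 M).sub (hCc.mul hv)
  have hftc : HasDerivAt (fun s => ∫ t in (0:ℝ)..s, phi t) (phi x) x :=
    (hphic.integral_hasStrictDerivAt 0 x).hasDerivAt
  have hev : fragFlux kf u =ᶠ[nhds x] fun s => ∫ t in (0:ℝ)..s, phi t := by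
    filter_upwards [isOpen_Ioi.mem_nhds hx] with s hs
    have e1 : fragFlux kf u s = fragFlux k v s := by
      unfold fragFlux
      apply intervalIntegral.integral_congr
      intro y hy
      rw [Set.uIcc_of_le (le_of_lt hs)] at hy
      apply setIntegral_congr_fun measurableSet_Ioi
      intro z hz
      have hz' : s - y < z := hz
      have hz0 : 0 < z := lt_of_le_of_lt (by linarith [hy.2]) hz'
      show y * kf y z * u (y + z) = y * k y z * v (y + z)
      rw [hkeq y z hy.1 hz0.le, hveq (y + z) (by linarith [hy.1])]
    rw [e1, repr_lemma hk hv hM0 hv0 hs]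
  have hQ : phi x = -(x * Qf kf u x) := by
    have hkcx : Continuous fun z => x * k x z * v (x + z) :=
      (continuous_const.mul (hk.uncurry_left x)).mul
        (hv.comp (continuous_const.add continuous_id))
    have h0x : ∀ z ≥ M, x * k x z * v (x + z) = 0 := fun z hz => by
      rw [hv0 (x + z) (by linarith), mul_zero]
    have e2 : (∫ z in (0:ℝ)..M, x * k x z * v (x + z))
        = x * ∫ z in Set.Ioi (0:ℝ), kf x z * u (x + z) := by
      rw [← Ioi_eq_interval hM0.le hkcx h0x,
        setIntegral_congr_fun measurableSet_Ioi
          (g := fun z => x * (kf x z * u (x + z)))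
          (fun z hz => by
            rw [hkeq x z hx.le (le_of_lt hz), hveq (x + z) (by simp at hz; linarith), mul_assoc])]
      exact integral_const_mul x _
    have e3 : (∫ y in (0:ℝ)..x, y * k y (x - y)) = x / 2 * ∫ y in (0:ℝ)..x, kf y (x - y) := by
      rw [Cker_sym hk hsym x]
      congr 1
      apply intervalIntegral.integral_congr
      intro y hy
      rw [Set.uIcc_of_le hx.le] at hy
      exact hkeq y (x - y) hy.1 (by linarith [hy.2])
    show (∫ z in (0:ℝ)..M, x * k x z * v (x + z))
      - (∫ y in (0:ℝ)..x, y * k y (x - y)) * v x = -(x * Qf kf u x)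
    rw [e2, e3, hveq x hx.le]
    simp only [Qf]
    ring
  have hmain := hftc.congr_of_eventuallyEq hev
  rw [hQ] at hmain
  exact hmain
end
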